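/- Let V be a subspace of ℝ^n and F ∈ ℝ^{m×n} a feedback such that (A+BF)V ⊆ V and (C+DF)V = 0. Then every x_0 ∈ V is weakly unobservable: with the smooth input u(t) = F e^{(A+BF)t} x_0, the state trajectory from x_0 stays in V and the output y(t; x_0, u) is identically zero for t ≥ 0. -/

import Mathlib

open Matrix

attribute [local instance] Matrix.linftyOpNormedRing Matrix.linftyOpNormedAlgebra

/-- If `V` is a subspace with a feedback `F` such that `(A+BF)V ⊆ V` and
`(C+DF)V = 0`, then every `x₀ ∈ V` is weakly unobservable: with the smooth
input `u(t) = F e^{(A+BF)t} x₀`, the state trajectory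
`x(t) = e^{(A+BF)t} x₀` from `x₀` solves `ẋ = Ax + Bu`, stays in `V`, and the
output `y(t) = Cx(t) + Du(t)` is identically zero for `t ≥ 0`. -/
theorem weakly_unobservable_of_invariant {n m p : ℕ}
    (A : Matrix (Fin n) (Fin n) ℝ) (B : Matrix (Fin n) (Fin m) ℝ)
    (C : Matrix (Fin p) (Fin n) ℝ) (D : Matrix (Fin p) (Fin m) ℝ)
    (V : Submodule ℝ (Fin n → ℝ)) (F : Matrix (Fin m) (Fin n) ℝ)
    (hinv : ∀ v ∈ V, (A + B * F).mulVec v ∈ V)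
    (hout : ∀ v ∈ V, (C + D * F).mulVec v = 0)
    (x₀ : Fin n → ℝ) (hx₀ : x₀ ∈ V) :
    let x : ℝ → Fin n → ℝ := fun t => (NormedSpace.exp (t • (A + B * F))).mulVec x₀
    let u : ℝ → Fin m → ℝ := fun t => F.mulVec (x t)
    (∀ t : ℝ, HasDerivAt x (A.mulVec (x t) + B.mulVec (u t)) t) ∧
    (x 0 = x₀) ∧
    (∀ t : ℝ, x t ∈ V) ∧
    (∀ t : ℝ, 0 ≤ t → C.mulVec (x t) + D.mulVec (u t) = 0) := by
  intro x u
  set M : Matrix (Fin n) (Fin n) ℝ := A + B * F with hM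
  -- the continuous linear map `N ↦ N.mulVec x₀`
  let L₀ : Matrix (Fin n) (Fin n) ℝ →ₗ[ℝ] (Fin n → ℝ) :=
    { toFun := fun N => N.mulVec x₀
      map_add' := fun N₁ N₂ => Matrix.add_mulVec N₁ N₂ x₀
      map_smul' := fun c N => Matrix.smul_mulVec c N x₀ }
  let L : Matrix (Fin n) (Fin n) ℝ →L[ℝ] (Fin n → ℝ) := L₀.toContinuousLinearMap
  have hL : ∀ N : Matrix (Fin n) (Fin n) ℝ, L N = N.mulVec x₀ := fun N => rfl
  -- state stays in V
  have hmem : ∀ t : ℝ, x t ∈ V := by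
    intro t
    have hpow : ∀ k : ℕ, ((t • M) ^ k).mulVec x₀ ∈ V := by
      intro k
      induction k with
      | zero => simpa using hx₀
      | succ k ih =>
        rw [pow_succ', ← Matrix.mulVec_mulVec, Matrix.smul_mulVec]
        exact V.smul_mem t (hinv _ ih)
    have hterm : ∀ k : ℕ, (((k.factorial : ℝ)⁻¹) • (t • M) ^ k).mulVec x₀ ∈ V := by
      intro k
      rw [Matrix.smul_mulVec]
      exact V.smul_mem _ (hpow k)
    have hsum : HasSum (fun k : ℕ => (((k.factorial : ℝ)⁻¹) • (t • M) ^ k).mulVec x₀) (x t) := by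
      have hs := (NormedSpace.expSeries_summable' (𝕂 := ℝ) (t • M)).hasSum
      have h2 := hs.mapL L
      have hx : x t = L (∑' k : ℕ, ((k.factorial : ℝ)⁻¹) • (t • M) ^ k) := by
        show (NormedSpace.exp (t • M)).mulVec x₀ = _
        rw [NormedSpace.exp_eq_tsum ℝ]
        rfl
      rw [hx]
      exact h2
    exact (Submodule.closed_of_finiteDimensional V).mem_of_tendsto
      hsum.tendsto_sum_nat
      (Filter.Eventually.of_forall fun N => V.sum_mem fun k _ => hterm k)
  refine ⟨?_, ?_, hmem, ?_⟩
  · intro t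
    have hd := hasDerivAt_exp_smul_const (𝕂 := ℝ) M t
    have hd2 := (L.hasFDerivAt.comp_hasDerivAt t hd)
    have hcomm : M * NormedSpace.exp (t • M) = NormedSpace.exp (t • M) * M :=
      ((Commute.refl M).smul_right t).exp_right
    have : A.mulVec (x t) + B.mulVec (u t) = L (NormedSpace.exp (t • M) * M) := by
      rw [hL, ← hcomm, ← Matrix.mulVec_mulVec]
      show _ = (A + B * F).mulVec (x t)
      rw [Matrix.add_mulVec, ← Matrix.mulVec_mulVec]
    rw [this]
    exact hd2
  · simp [x]
  · intro t _
    have h0 := hout _ (hmem t)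
    rw [Matrix.add_mulVec, ← Matrix.mulVec_mulVec] at h0
    exact h0
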